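/- In minimal propositional logic ⊢_m (positive logic plus ¬φ ≈ φ→⊥), the Dragalin–Friedman map jφ = φ ∨ ⊥ is a nucleus, the stability axiom jφ ⊢ φ is equivalent over ⊢_m to ex falso quodlibet ⊥ ⊢ φ, and hence the strong j-extension of ⊢_m is intuitionistic logic ⊢_i. Moreover, the rule R→ is NOT compatible with j over ⊢_m: it is not the case that φ → (ψ ∨ ⊥) ⊢_m (φ → ψ) ∨ ⊥ for all φ, ψ. -/
import Mathlib


/-- A single-conclusion entailment relation on `S`. -/
structure IsEntailment {S : Type*} [DecidableEq S] (E : Finset S → S → Prop) : Prop where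
  refl : ∀ (U : Finset S) (a : S), a ∈ U → E U a
  mono : ∀ (U U' : Finset S) (a : S), E U a → E (U ∪ U') a
  cut : ∀ (V V' : Finset S) (a b : S), E V b → E (insert b V') a → E (V ∪ V') a

/-- A nucleus over an entailment relation. -/
structure IsNucleus {S : Type*} [DecidableEq S] (E : Finset S → S → Prop) (j : S → S) : Prop where
  lj : ∀ (U : Finset S) (a b : S), E (insert a U) (j b) → E (insert (j a) U) (j b)
  rj : ∀ (U : Finset S) (b : S), E U b → E U (j b)

/-- Propositional formulas over countably many atoms. -/
inductive Fml where
  | atom : ℕ → Fml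
  | top : Fml
  | bot : Fml
  | and : Fml → Fml → Fml
  | or : Fml → Fml → Fml
  | imp : Fml → Fml → Fml
  | neg : Fml → Fml
deriving DecidableEq

/-- Generators of positive propositional logic: an entailment relation closed
under the deduction rule R→ and the standard axioms for ∧, ∨, →, ⊤. -/
structure PosGen (E : Finset Fml → Fml → Prop) : Prop where
  ent : IsEntailment E
  rimp : ∀ (Γ : Finset Fml) (φ ψ : Fml), E (insert φ Γ) ψ → E Γ (φ.imp ψ)
  andI : ∀ φ ψ : Fml, E {φ, ψ} (φ.and ψ)
  andE1 : ∀ φ ψ : Fml, E {φ.and ψ} φ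
  andE2 : ∀ φ ψ : Fml, E {φ.and ψ} ψ
  orI1 : ∀ φ ψ : Fml, E {φ} (φ.or ψ)
  orI2 : ∀ φ ψ : Fml, E {ψ} (φ.or ψ)
  orE : ∀ φ ψ δ : Fml, E {φ.or ψ, φ.imp δ, ψ.imp δ} δ
  mp : ∀ φ ψ : Fml, E {φ, φ.imp ψ} ψ
  topI : E ∅ Fml.top

/-- Generators of minimal logic: positive logic plus `¬φ ≈ φ → ⊥`. -/
structure MinGen (E : Finset Fml → Fml → Prop) extends PosGen E : Prop where
  pc1 : ∀ φ : Fml, E {φ.imp .bot} φ.neg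
  pc2 : ∀ φ : Fml, E {φ.neg} (φ.imp .bot)

/-- Generators of intuitionistic logic: minimal logic plus ex falso quodlibet. -/
structure IntGen (E : Finset Fml → Fml → Prop) extends MinGen E : Prop where
  efq : ∀ φ : Fml, E {Fml.bot} φ

/-- Generators of classical logic: intuitionistic logic plus reductio ad absurdum. -/
structure ClGen (E : Finset Fml → Fml → Prop) extends IntGen E : Prop where
  raa : ∀ φ : Fml, E {φ.neg.neg} φ

/-- Minimal propositional logic `⊢_m`. -/
def MinD (Γ : Finset Fml) (φ : Fml) : Prop :=
  ∀ E : Finset Fml → Fml → Prop, MinGen E → E Γ φ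

/-- Intuitionistic propositional logic `⊢_i`. -/
def IntD (Γ : Finset Fml) (φ : Fml) : Prop :=
  ∀ E : Finset Fml → Fml → Prop, IntGen E → E Γ φ

/-- Classical propositional logic `⊢_c`. -/
def ClD (Γ : Finset Fml) (φ : Fml) : Prop :=
  ∀ E : Finset Fml → Fml → Prop, ClGen E → E Γ φ

/-- Minimal logic plus the stability axioms `φ ∨ ⊥ ⊢ φ`: the strong
`j`-extension of `⊢_m` for the Dragalin–Friedman nucleus. -/
def MinStabD (Γ : Finset Fml) (φ : Fml) : Prop :=
  ∀ E : Finset Fml → Fml → Prop, MinGen E → (∀ χ : Fml, E {χ.or .bot} χ) → E Γ φ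

section Helpers

variable {E : Finset Fml → Fml → Prop}

lemma wk (hE : IsEntailment E) {U V : Finset Fml} {a : Fml}
    (h : E U a) (hUV : U ⊆ V) : E V a := by
  have := hE.mono U V a h
  rwa [Finset.union_eq_right.mpr hUV] at this

lemma cutH (hE : IsEntailment E) {V : Finset Fml} {a b : Fml}
    (h1 : E V b) (h2 : E (insert b V) a) : E V a := by
  have := hE.cut V V a b h1 h2
  rwa [Finset.union_self] at this

lemma orElim (hE : PosGen E) {Γ : Finset Fml} {φ ψ δ : Fml}
    (h : E Γ (φ.or ψ)) (h1 : E (insert φ Γ) δ) (h2 : E (insert ψ Γ) δ) :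
    E Γ δ := by
  have r1 : E Γ (φ.imp δ) := hE.rimp Γ φ δ h1
  have r2 : E Γ (ψ.imp δ) := hE.rimp Γ ψ δ h2
  have big : E (insert (φ.or ψ) (insert (φ.imp δ) (insert (ψ.imp δ) Γ))) δ :=
    wk hE.ent (hE.orE φ ψ δ) (by intro x hx; simp at hx ⊢; tauto)
  have s2 : E (insert (φ.imp δ) (insert (ψ.imp δ) Γ)) δ :=
    cutH hE.ent (wk hE.ent h (by intro x hx; simp; tauto)) big
  have s1 : E (insert (ψ.imp δ) Γ) δ :=
    cutH hE.ent (wk hE.ent r1 (Finset.subset_insert _ _)) s2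
  exact cutH hE.ent r2 s1

end Helpers

lemma minGen_MinD : MinGen MinD where
  ent := ⟨fun U a h E hE => hE.ent.refl U a h,
          fun U U' a h E hE => hE.ent.mono U U' a (h E hE),
          fun V V' a b h1 h2 E hE => hE.ent.cut V V' a b (h1 E hE) (h2 E hE)⟩
  rimp := fun Γ φ ψ h E hE => hE.rimp Γ φ ψ (h E hE)
  andI := fun φ ψ E hE => hE.andI φ ψ
  andE1 := fun φ ψ E hE => hE.andE1 φ ψ
  andE2 := fun φ ψ E hE => hE.andE2 φ ψ
  orI1 := fun φ ψ E hE => hE.orI1 φ ψ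
  orI2 := fun φ ψ E hE => hE.orI2 φ ψ
  orE := fun φ ψ δ E hE => hE.orE φ ψ δ
  mp := fun φ ψ E hE => hE.mp φ ψ
  topI := fun E hE => hE.topI
  pc1 := fun φ E hE => hE.pc1 φ
  pc2 := fun φ E hE => hE.pc2 φ

/-- Kripke countermodel: two worlds `false ≤ true`, atom 0 and ⊥ forced
only at `true`, all other atoms never forced. -/
def force : Fml → Bool → Prop
  | .atom 0, w => w = true
  | .atom (_+1), _ => False
  | .top, _ => True
  | .bot, w => w = true
  | .and a b, w => force a w ∧ force b w
  | .or a b, w => force a w ∨ force b w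
  | .imp a b, w => ∀ w', w ≤ w' → force a w' → force b w'
  | .neg a, w => ∀ w', w ≤ w' → force a w' → w' = true

lemma force_mono : ∀ (φ : Fml) (w w' : Bool), w ≤ w' → force φ w → force φ w' := by
  intro φ
  induction φ with
  | atom n =>
    match n with
    | 0 => intro w w' hw h; simp only [force] at h ⊢; subst h; revert hw; revert w'; decide
    | m+1 => intro w w' hw h; exact h.elim
  | top => intro _ _ _ _; trivial
  | bot => intro w w' hw h; simp only [force] at h ⊢; subst h; revert hw; revert w'; decide
  | and a b iha ihb =>
    intro w w' hw h
    exact ⟨iha w w' hw h.1, ihb w w' hw h.2⟩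
  | or a b iha ihb =>
    intro w w' hw h
    exact h.elim (fun h => Or.inl (iha w w' hw h)) (fun h => Or.inr (ihb w w' hw h))
  | imp a b iha ihb =>
    intro w w' hw h w'' hw'' ha
    exact h w'' (le_trans hw hw'') ha
  | neg a iha =>
    intro w w' hw h w'' hw'' ha
    exact h w'' (le_trans hw hw'') ha

/-- The Kripke entailment relation. -/
def EK (Γ : Finset Fml) (φ : Fml) : Prop :=
  ∀ w : Bool, (∀ γ ∈ Γ, force γ w) → force φ w

lemma minGen_EK : MinGen EK where
  ent := ⟨fun U a h w hw => hw a h,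
          fun U U' a h w hw => h w (fun γ hγ => hw γ (Finset.mem_union_left _ hγ)),
          fun V V' a b h1 h2 w hw => by
            apply h2 w
            intro γ hγ
            rcases Finset.mem_insert.mp hγ with h | h
            · subst h; exact h1 w (fun γ hγ => hw γ (Finset.mem_union_left _ hγ))
            · exact hw γ (Finset.mem_union_right _ h)⟩
  rimp := fun Γ φ ψ h w hw => by
    simp only [force]
    intro w' hww' hφ
    apply h w'
    intro γ hγ
    rcases Finset.mem_insert.mp hγ with h' | h'
    · subst h'; exact hφ
    · exact force_mono γ w w' hww' (hw γ h')
  andI := fun φ ψ w hw => by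
    simp only [force]
    exact ⟨hw φ (by simp), hw ψ (by simp)⟩
  andE1 := fun φ ψ w hw => by
    have := hw (φ.and ψ) (by simp); simp only [force] at this; exact this.1
  andE2 := fun φ ψ w hw => by
    have := hw (φ.and ψ) (by simp); simp only [force] at this; exact this.2
  orI1 := fun φ ψ w hw => by
    simp only [force]; exact Or.inl (hw φ (by simp))
  orI2 := fun φ ψ w hw => by
    simp only [force]; exact Or.inr (hw ψ (by simp))
  orE := fun φ ψ δ w hw => by
    have hor := hw (φ.or ψ) (by simp)
    have h1 := hw (φ.imp δ) (by simp)
    have h2 := hw (ψ.imp δ) (by simp)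
    simp only [force] at hor h1 h2
    rcases hor with h | h
    · exact h1 w le_rfl h
    · exact h2 w le_rfl h
  mp := fun φ ψ w hw => by
    have h1 := hw (φ.imp ψ) (by simp)
    simp only [force] at h1
    exact h1 w le_rfl (hw φ (by simp))
  topI := fun w _ => by simp only [force]
  pc1 := fun φ w hw => by
    have := hw (φ.imp .bot) (by simp)
    simp only [force] at this ⊢
    exact this
  pc2 := fun φ w hw => by
    have := hw φ.neg (by simp)
    simp only [force] at this ⊢
    exact this

/-- the Dragalin–Friedman map `jφ = φ ∨ ⊥` is a nucleus over
minimal logic; stability `jφ ⊢ φ` is equivalent over `⊢_m` to ex falso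
quodlibet `⊥ ⊢ φ`; hence the strong `j`-extension of `⊢_m` is intuitionistic
logic; and R→ is not compatible with `j` over `⊢_m`. -/
theorem dragalin_friedman :
    IsNucleus MinD (fun φ : Fml => φ.or .bot) ∧
    (∀ φ : Fml, (MinD {φ.or .bot} φ ↔ MinD {Fml.bot} φ)) ∧
    (∀ (Γ : Finset Fml) (φ : Fml), MinStabD Γ φ ↔ IntD Γ φ) ∧
    ¬ (∀ φ ψ : Fml, MinD {φ.imp (ψ.or .bot)} ((φ.imp ψ).or .bot)) := by
  have hM := minGen_MinD
  have hent := hM.ent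
  refine ⟨?_, ?_, ?_, ?_⟩
  · -- nucleus
    constructor
    · intro U a b h
      refine orElim hM.toPosGen (φ := a) (ψ := .bot)
        (hent.refl _ _ (Finset.mem_insert_self _ _)) ?_ ?_
      · exact wk hent h (by intro x hx; simp at hx ⊢; tauto)
      · exact wk hent (hM.orI2 b .bot) (by intro x hx; simp at hx ⊢; tauto)
    · intro U b h
      exact cutH hent h (wk hent (hM.orI1 b .bot) (by intro x hx; simp at hx ⊢; tauto))
  · -- stability ↔ efq
    intro φ
    constructor
    · intro h
      have h1 : MinD {Fml.bot} (φ.or .bot) := hM.orI2 φ .bot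
      exact cutH hent h1 (wk hent h (by intro x hx; simp at hx ⊢; tauto))
    · intro h
      refine orElim hM.toPosGen (φ := φ) (ψ := .bot)
        (hent.refl _ _ (by simp)) (hent.refl _ _ (by simp)) ?_
      exact wk hent h (by intro x hx; simp at hx ⊢; tauto)
  · -- MinStabD = IntD
    intro Γ φ
    constructor
    · intro h E hE
      refine h E hE.toMinGen ?_
      intro χ
      refine orElim hE.toPosGen (φ := χ) (ψ := .bot)
        (hE.ent.refl _ _ (by simp)) (hE.ent.refl _ _ (by simp)) ?_
      exact wk hE.ent (hE.efq χ) (by intro x hx; simp at hx ⊢; tauto)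
    · intro h E hE hstab
      refine h E ⟨hE, ?_⟩
      intro φ'
      exact cutH hE.ent (hE.orI2 φ' .bot)
        (wk hE.ent (hstab φ') (by intro x hx; simp at hx ⊢; tauto))
  · -- R→ not compatible with j
    intro h
    have := h (.atom 0) (.atom 1) EK minGen_EK false ?_
    · simp only [force] at this
      rcases this with h1 | h1
      · have := h1 true (by simp) rfl
        simp only [force] at this
      · exact Bool.false_ne_true h1
    · intro γ hγ
      simp only [Finset.mem_singleton] at hγ
      subst hγ
      simp only [force]
      intro w' _ hw'
      exact Or.inr hw'
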